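/- (Theorem 1.10, main technical bound.) Let c, d ≥ 1 be integers, let K be a d-collapsible simplicial complex with vertex partition N = N_1 ⊔ ⋯ ⊔ N_c, and let n = (n_1, …, n_c) with n_i = |N_i| ≥ 1. Let r = (r_1, …, r_c) be a vector of positive integers such that dim K[N_i] ≤ r_i − 1 for every i ∈ {1,…,c}, and let k = (k_1, …, k_c) be a vector of non-negative integers with k_i ≤ n_i for all i. Then f_k(K) ≤ p_k(n, d, r), i.e., the number of k-colorful faces of K is at most |{S ∈ binom(N,k) : |S ∩ (N \ R)| ≤ d}| for any choice of subsets R_i ⊆ N_i with |R_i| = r_i and R = R_1 ⊔ ⋯ ⊔ R_c. -/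
import Mathlib


open scoped BigOperators

/-- A (finite abstract) simplicial complex: a family of finite subsets of the vertex
type closed under taking subsets. -/
def IsComplex {V : Type*} [DecidableEq V] (K : Finset (Finset V)) : Prop :=
  ∀ A ∈ K, ∀ B ⊆ A, B ∈ K

/-- `K'` arises from `K` by an elementary `d`-collapse: there are faces `L, M ∈ K`
with `|L| ≤ d` (i.e. `dim L ≤ d - 1`) such that `M` is the unique inclusion-wise
maximal face of `K` containing `L` (equivalently, every face containing `L` is
contained in `M`), and `K'` is obtained from `K` by removing all faces containing `L`. -/
def ElemCollapse {V : Type*} [DecidableEq V] (d : ℕ) (K K' : Finset (Finset V)) : Prop :=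
  ∃ L M, L ∈ K ∧ M ∈ K ∧ L.card ≤ d ∧ (∀ A ∈ K, L ⊆ A → A ⊆ M) ∧
    K' = K.filter fun A => ¬ L ⊆ A

/-- `K` is `d`-collapsible: there is a sequence of elementary `d`-collapses from `K`
to the empty complex. -/
def Collapsible {V : Type*} [DecidableEq V] (d : ℕ) (K : Finset (Finset V)) : Prop :=
  Relation.ReflTransGen (ElemCollapse d) K ∅




open Finset Matrix

section Helpers

variable {F : Type*} [Field F]

/-- If there are more "special" columns than the rows allowed to support them, det vanishes. -/
lemma det_eq_zero_of_support {m : ℕ} (A : Matrix (Fin m) (Fin m) F)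
    (C T : Finset (Fin m)) (hCT : T.card < C.card)
    (h : ∀ j ∈ C, ∀ i, i ∉ T → A i j = 0) : A.det = 0 := by
  rw [Matrix.det_apply]
  apply Finset.sum_eq_zero
  intro σ _
  suffices h0 : ∃ j ∈ (univ : Finset (Fin m)), A (σ j) j = 0 by
    obtain ⟨j, hj, h0⟩ := h0
    rw [Finset.prod_eq_zero (f := fun i => A (σ i) i) hj h0, smul_zero]
  by_contra hcon
  push_neg at hcon
  have hmap : ∀ j ∈ C, σ j ∈ T := by
    intro j hj
    by_contra hns
    exact hcon j (mem_univ j) (h j hj (σ j) hns)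
  have := Finset.card_le_card_of_injOn σ hmap (σ.injective.injOn)
  omega

/-- Determinant vanishes if a "color" pattern forces a fiber-size mismatch. -/
lemma det_eq_zero_of_fiber_card_ne {m : ℕ} {γ : Type*} [DecidableEq γ]
    (W : Matrix (Fin m) (Fin m) F) (f g : Fin m → γ)
    (hW : ∀ i j, f i ≠ g j → W i j = 0) (t : γ)
    (hcard : (univ.filter fun i => f i = t).card ≠ (univ.filter fun j => g j = t).card) :
    W.det = 0 := by
  rw [Matrix.det_apply]
  apply Finset.sum_eq_zero
  intro σ _
  suffices h0 : ∃ j ∈ (univ : Finset (Fin m)), W (σ j) j = 0 by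
    obtain ⟨j, hj, h0⟩ := h0
    rw [Finset.prod_eq_zero (f := fun i => W (σ i) i) hj h0, smul_zero]
  by_contra hcon
  push_neg at hcon
  have hfg : ∀ j, f (σ j) = g j := by
    intro j
    by_contra hne
    exact hcon j (mem_univ j) (hW _ _ hne)
  apply hcard
  have h1 : (univ.filter fun j : Fin m => f (σ j) = t) = (univ.filter fun j => g j = t) := by
    apply Finset.filter_congr; intro j _; simp [hfg j]
  have h2 : (univ.filter fun j : Fin m => f (σ j) = t).card
      = (univ.filter fun i => f i = t).card := by
    apply Finset.card_bij (fun j _ => σ j)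
    · intro j hj
      simp only [mem_filter, mem_univ, true_and] at hj ⊢
      exact hj
    · intro a _ b _ hab
      exact σ.injective hab
    · intro i hi
      refine ⟨σ.symm i, ?_, by simp⟩
      simp only [mem_filter, mem_univ, true_and] at hi ⊢
      simpa using hi
  rw [← h2, h1]

/-- Counting through `orderEmbOfFin`. -/
lemma card_filter_orderEmbOfFin {α : Type*} [LinearOrder α] {S : Finset α} {m : ℕ}
    (h : S.card = m) (p : α → Prop) [DecidablePred p] :
    (univ.filter fun j : Fin m => p (S.orderEmbOfFin h j)).card = (S.filter p).card := by
  apply Finset.card_bij (fun j _ => S.orderEmbOfFin h j)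
  · intro j hj
    simp only [mem_filter, mem_univ, true_and] at hj ⊢
    exact ⟨Finset.orderEmbOfFin_mem S h j, hj⟩
  · intro a _ b _ hab
    exact (S.orderEmbOfFin h).injective hab
  · intro a ha
    simp only [mem_filter] at ha
    have : a ∈ Set.range (S.orderEmbOfFin h) := by
      rw [Finset.range_orderEmbOfFin]; exact ha.1
    obtain ⟨j, hj⟩ := this
    exact ⟨j, by simp [mem_filter, hj, ha.2], hj⟩

end Helpers


open Finset Matrix

section CB

variable {F : Type*} [Field F] {α : Type*} [Fintype α] [LinearOrder α]

/-- Determinant of the submatrix of `M` given by columns `S` (in increasing order),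
or `0` if `S` has the wrong size. -/
noncomputable def msub {m : ℕ} (M : Matrix (Fin m) α F) (S : Finset α) : F :=
  if h : S.card = m then (M.submatrix id (S.orderEmbOfFin h)).det else 0

theorem cauchy_binet {m : ℕ} (M N : Matrix (Fin m) α F) :
    (M * Nᵀ).det = ∑ S ∈ Finset.univ.powersetCard m, msub M S * msub N S := by
  classical
  -- Step 1: expand rows
  have hrows : (M * Nᵀ) = Matrix.of (fun i => ∑ v : α, M i v • (fun j => N j v)) := by
    ext i j
    simp [Matrix.mul_apply, Finset.sum_apply, smul_eq_mul]
  have hdet1 : (M * Nᵀ).det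
      = ∑ rfun : Fin m → α, (∏ i, M i (rfun i)) •
          (Matrix.of (fun i j => N j (rfun i))).det := by
    rw [hrows]
    show (Matrix.detRowAlternating (R := F) (n := Fin m)).toMultilinearMap
        (fun i => ∑ v : α, M i v • (fun j => N j v)) = _
    rw [MultilinearMap.map_sum]
    apply Finset.sum_congr rfl
    intro rfun _
    rw [MultilinearMap.map_smul_univ]
    rfl
  rw [hdet1]
  -- Step 2: kill non-injective rfun
  have hinj0 : ∀ rfun : Fin m → α, ¬ Function.Injective rfun →
      (Matrix.of (fun i j => N j (rfun i))).det = 0 := by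
    intro rfun hni
    rw [Function.not_injective_iff] at hni
    obtain ⟨i, i', heq, hne⟩ := hni
    exact Matrix.det_zero_of_row_eq hne (by ext j; simp [heq])
  have hstep2 : ∑ rfun : Fin m → α, (∏ i, M i (rfun i)) •
          (Matrix.of (fun i j => N j (rfun i))).det
      = ∑ rfun ∈ univ.filter (fun rfun : Fin m → α => Function.Injective rfun),
          (∏ i, M i (rfun i)) • (Matrix.of (fun i j => N j (rfun i))).det := by
    symm
    apply Finset.sum_filter_of_ne
    intro rfun _ hne
    by_contra hni
    exact hne (by rw [hinj0 rfun hni, smul_zero])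
  rw [hstep2]
  -- Step 3: fiber by image
  rw [← Finset.sum_fiberwise_of_maps_to
    (g := fun rfun : Fin m → α => Finset.univ.image rfun)
    (t := Finset.univ.powersetCard m) ?hmaps]
  case hmaps =>
    intro rfun hr
    simp only [mem_filter, mem_univ, true_and] at hr
    rw [Finset.mem_powersetCard]
    exact ⟨subset_univ _, by rw [Finset.card_image_of_injective _ hr, Finset.card_fin]⟩
  -- Step 4: per fiber
  apply Finset.sum_congr rfl
  intro S hS
  rw [Finset.mem_powersetCard] at hS
  obtain ⟨-, hScard⟩ := hS
  rw [msub, msub, dif_pos hScard, dif_pos hScard]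
  set e : Fin m ↪o α := S.orderEmbOfFin hScard with he
  have hrange : ∀ x, x ∈ S ↔ ∃ j, e j = x := by
    intro x
    constructor
    · intro hx
      have : x ∈ Set.range e := by rw [he, Finset.range_orderEmbOfFin]; exact hx
      exact this
    · rintro ⟨j, rfl⟩
      exact Finset.orderEmbOfFin_mem S hScard j
  have himg : Finset.univ.image (fun i => e i) = S := by
    ext x
    simp only [Finset.mem_image, mem_univ, true_and]
    exact (hrange x).symm
  -- bijection between the fiber and permutations
  have hbij : ∑ rfun ∈ (univ.filter (fun rfun : Fin m → α => Function.Injective rfun)).filter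
        (fun rfun => Finset.univ.image rfun = S),
        (∏ i, M i (rfun i)) • (Matrix.of (fun i j => N j (rfun i))).det
      = ∑ σ : Equiv.Perm (Fin m),
        (∏ i, M i (e (σ i))) • (Matrix.of (fun i j => N j (e (σ i)))).det := by
    symm
    apply Finset.sum_bij (i := fun (σ : Equiv.Perm (Fin m)) _ => (fun i => e (σ i)))
    · intro σ _
      simp only [Finset.mem_filter, mem_univ, true_and]
      constructor
      · exact e.injective.comp σ.injective
      · rw [← himg]
        ext x
        simp only [Finset.mem_image, mem_univ, true_and]
        constructor
        · rintro ⟨i, rfl⟩; exact ⟨σ i, rfl⟩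
        · rintro ⟨i, rfl⟩; exact ⟨σ.symm i, by simp⟩
    · intro σ _ τ _ hfun
      ext i
      exact congrArg Fin.val (e.injective (congrFun hfun i))
    · intro rfun hr
      simp only [Finset.mem_filter, mem_univ, true_and] at hr
      obtain ⟨hinj, himgr⟩ := hr
      have hmem : ∀ i, rfun i ∈ S := by
        intro i
        rw [← himgr]
        exact Finset.mem_image_of_mem _ (mem_univ i)
      set iso := S.orderIsoOfFin hScard with hiso
      have hiso_e : ∀ j : Fin m, (iso j : α) = e j := fun j => rfl
      set σfun : Fin m → Fin m := fun i => iso.symm ⟨rfun i, hmem i⟩ with hσfun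
      have hσinj : Function.Injective σfun := by
        intro a b hab
        apply hinj
        have h2 : iso (iso.symm ⟨rfun a, hmem a⟩) = iso (iso.symm ⟨rfun b, hmem b⟩) :=
          congrArg iso hab
        rw [OrderIso.apply_symm_apply, OrderIso.apply_symm_apply] at h2
        exact congrArg Subtype.val h2
      have hσbij : Function.Bijective σfun := (Finite.injective_iff_bijective).mp hσinj
      refine ⟨Equiv.ofBijective σfun hσbij, mem_univ _, ?_⟩
      funext i
      show e (σfun i) = rfun i
      have : (iso (σfun i) : α) = rfun i := by
        rw [hσfun]
        simp only [OrderIso.apply_symm_apply]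
      rw [← hiso_e]
      exact this
    · intro σ _
      rfl
  rw [hbij]
  -- Step 5: compute the sum over permutations
  have hperm : ∀ σ : Equiv.Perm (Fin m),
      (Matrix.of (fun i j => N j (e (σ i)))).det
        = (Equiv.Perm.sign σ : ℤ) * (N.submatrix id e).det := by
    intro σ
    have h1 : (Matrix.of (fun i j => N j (e (σ i))))
        = ((N.submatrix id (e : Fin m → α))ᵀ).submatrix σ id := by
      ext i j; rfl
    rw [h1, Matrix.det_permute, Matrix.det_transpose]
    try norm_num
  have hdetM : (M.submatrix id (e : Fin m → α)).det
      = ∑ σ : Equiv.Perm (Fin m), (Equiv.Perm.sign σ : ℤ) * ∏ i, M i (e (σ i)) := by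
    rw [← Matrix.det_transpose, Matrix.det_apply]
    apply Finset.sum_congr rfl
    intro σ _
    simp only [Units.smul_def, zsmul_eq_mul, Matrix.transpose_apply, Matrix.submatrix_apply,
      id_eq]
    try push_cast
    try ring
  rw [hdetM, Finset.sum_mul]
  apply Finset.sum_congr rfl
  intro σ _
  rw [hperm σ, smul_eq_mul]
  try push_cast
  try ring

end CB

set_option linter.unusedSectionVars false

section FieldSetup

variable {V : Type} [Fintype V] [DecidableEq V] [LinearOrder V] {c : ℕ}

/-- The base polynomial ring with one indeterminate per (vertex, vertex) pair. -/
abbrev PolyV (V : Type) := MvPolynomial (V × V) ℚ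

/-- Its fraction field: the generic coefficient field. -/
abbrev FF (V : Type) := FractionRing (PolyV V)

/-- The generic row vectors: generic entries in the `R`-columns of the own color,
standard basis entries in the other columns. -/
noncomputable def xp (color : V → Fin c) (R : Finset V) : V → V → PolyV V := fun a s =>
  if s ∈ R then (if color a = color s then MvPolynomial.X (a, s) else 0)
  else (if a = s then 1 else 0)

noncomputable def xF (color : V → Fin c) (R : Finset V) : V → V → FF V := fun a s =>
  algebraMap (PolyV V) (FF V) (xp color R a s)

lemma xF_color_ne (color : V → Fin c) (R : Finset V) {a s : V} (h : color a ≠ color s) :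
    xF color R a s = 0 := by
  unfold xF xp
  by_cases hs : s ∈ R
  · rw [if_pos hs, if_neg h, map_zero]
  · rw [if_neg hs, if_neg (by rintro rfl; exact h rfl), map_zero]

lemma xF_notR (color : V → Fin c) (R : Finset V) {a s : V} (h : s ∉ R) :
    xF color R a s = if a = s then 1 else 0 := by
  unfold xF xp
  rw [if_neg h]
  split <;> simp

/-- The full generic matrix. -/
noncomputable def Xmat (color : V → Fin c) (R : Finset V) : Matrix V V (FF V) :=
  Matrix.of (xF color R)

lemma det_Xmat_ne_zero (color : V → Fin c) (R : Finset V) :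
    (Xmat color R).det ≠ 0 := by
  classical
  have hXm : Xmat color R
      = (algebraMap (PolyV V) (FF V)).mapMatrix (Matrix.of (xp color R)) := by
    ext a s; rfl
  have hdet : (Xmat color R).det
      = algebraMap (PolyV V) (FF V) (Matrix.of (xp color R)).det := by
    rw [hXm, ← RingHom.map_det]
  rw [hdet]
  intro hcon
  have hinj := IsFractionRing.injective (PolyV V) (FF V)
  have h0 : (Matrix.of (xp color R)).det = 0 := by
    apply hinj; rw [hcon, map_zero]
  -- evaluate variables to a Kronecker delta
  set ev : PolyV V →+* ℚ := (MvPolynomial.eval (fun p : V × V => if p.1 = p.2 then (1:ℚ) else 0)) with hev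
  have hmap : ev.mapMatrix (Matrix.of (xp color R)) = 1 := by
    ext a s
    simp only [RingHom.mapMatrix_apply, Matrix.map_apply, Matrix.of_apply]
    unfold xp
    by_cases hs : s ∈ R
    · rw [if_pos hs]
      by_cases hcs : color a = color s
      · rw [if_pos hcs, hev]
        simp only [MvPolynomial.eval_X]
        by_cases has : a = s
        · rw [if_pos has, has, Matrix.one_apply_eq]
        · rw [if_neg has, Matrix.one_apply_ne has]
      · rw [if_neg hcs, map_zero, Matrix.one_apply_ne (by rintro rfl; exact hcs rfl)]
    · rw [if_neg hs]
      by_cases has : a = s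
      · subst has
        rw [if_pos rfl, _root_.map_one, Matrix.one_apply_eq]
      · rw [if_neg has, map_zero, Matrix.one_apply_ne has]
  have : ev (Matrix.of (xp color R)).det = 1 := by
    rw [RingHom.map_det, hmap, Matrix.det_one]
  rw [h0, map_zero] at this
  exact zero_ne_one this

/-- Dual basis vectors: columns of the inverse matrix. -/
noncomputable def xiv (color : V → Fin c) (R : Finset V) (b : V) : V → FF V :=
  fun s => (Xmat color R)⁻¹ s b

lemma pair_xi (color : V → Fin c) (R : Finset V) (a b : V) :
    ∑ s : V, xF color R a s * xiv color R b s = if a = b then 1 else 0 := by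
  have hunit : IsUnit (Xmat color R).det :=
    isUnit_iff_ne_zero.mpr (det_Xmat_ne_zero color R)
  have := Matrix.mul_nonsing_inv (Xmat color R) hunit
  have happ : (Xmat color R * (Xmat color R)⁻¹) a b = (1 : Matrix V V (FF V)) a b := by
    rw [this]
  rw [Matrix.mul_apply] at happ
  rw [show (∑ s : V, xF color R a s * xiv color R b s)
      = ∑ s : V, Xmat color R a s * (Xmat color R)⁻¹ s b from rfl, happ, Matrix.one_apply]

end FieldSetup

section Zeta

set_option linter.unusedSectionVars false

open Finset Matrix

variable {V : Type} [Fintype V] [DecidableEq V] [LinearOrder V] {c : ℕ}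

lemma zeta_exists (color : V → Fin c) (R : Finset V) (r : Fin c → ℕ)
    (hR : ∀ i, (R.filter fun v => color v = i).card = r i)
    (Mf : Finset V) (hMf : ∀ i, (Mf.filter fun v => color v = i).card ≤ r i) :
    ∃ ζ : V → V → FF V,
      (∀ w s, ζ w s ≠ 0 → s ∈ R ∧ color s = color w) ∧
      (∀ a ∈ Mf, ∀ w ∈ Mf, ∑ s : V, xF color R a s * ζ w s = if a = w then 1 else 0) := by
  classical
  have key : ∀ i : Fin c, ∃ ζi : V → V → FF V,
      (∀ w s, ζi w s ≠ 0 → s ∈ R ∧ color s = i ∧ w ∈ Mf ∧ color w = i) ∧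
      (∀ a ∈ Mf, ∀ w ∈ Mf, color w = i →
        ∑ s : V, xF color R a s * ζi w s = if a = w then 1 else 0) := by
    intro i
    set Ei : Finset V := Mf.filter (fun v => color v = i) with hEi
    set Ri : Finset V := R.filter (fun v => color v = i) with hRi
    have hcard : Ei.card ≤ Ri.card := by rw [hRi, hR i]; exact hMf i
    have hcard' : Fintype.card ↥Ei ≤ Fintype.card ↥Ri := by
      rwa [Fintype.card_coe, Fintype.card_coe]
    obtain ⟨e⟩ : Nonempty (↥Ei ↪ ↥Ri) := Function.Embedding.nonempty_of_card_le hcard'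
    -- the square matrix
    set Qp : Matrix ↥Ri ↥Ri (PolyV V) := fun t s =>
      if h : ∃ a : ↥Ei, e a = t then xp color R ((Classical.choose h : ↥Ei) : V) (s : V)
      else (if t = s then 1 else 0) with hQp
    have hrow : ∀ (a : ↥Ei) (s : ↥Ri), Qp (e a) s = xp color R (a : V) (s : V) := by
      intro a s
      have hex : ∃ a' : ↥Ei, e a' = e a := ⟨a, rfl⟩
      rw [hQp]
      simp only [dif_pos hex]
      have : Classical.choose hex = a := e.injective (Classical.choose_spec hex)
      rw [this]
    have hEmem : ∀ a : ↥Ei, (a : V) ∈ Mf ∧ color (a : V) = i := by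
      intro a
      exact Finset.mem_filter.mp a.2
    have hRmem : ∀ s : ↥Ri, (s : V) ∈ R ∧ color (s : V) = i := by
      intro s
      exact Finset.mem_filter.mp s.2
    -- determinant of Qp is nonzero
    have hdetQ : Qp.det ≠ 0 := by
      set ev : PolyV V →+* ℚ := (MvPolynomial.eval (fun p : V × V =>
        if h : p.1 ∈ Ei then (if ((e ⟨p.1, h⟩ : ↥Ri) : V) = p.2 then (1:ℚ) else 0) else 0))
        with hev
      intro hcon
      have hmap : ev.mapMatrix Qp = 1 := by
        ext t s
        simp only [RingHom.mapMatrix_apply, Matrix.map_apply]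
        by_cases hex : ∃ a : ↥Ei, e a = t
        · obtain ⟨a, rfl⟩ := hex
          rw [hrow a s]
          have ha := hEmem a
          have hs := hRmem s
          have hxp : xp color R (a : V) (s : V) = MvPolynomial.X ((a : V), (s : V)) := by
            unfold xp
            rw [if_pos hs.1, if_pos (by rw [ha.2, hs.2])]
          rw [hxp, hev]
          simp only [MvPolynomial.eval_X]
          have hmem : (a : V) ∈ Ei := a.2
          rw [dif_pos hmem]
          have heta : (⟨(a : V), hmem⟩ : ↥Ei) = a := rfl
          rw [heta]
          by_cases hts : e a = s
          · rw [if_pos (by rw [hts]), hts, Matrix.one_apply_eq]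
          · rw [if_neg (fun h => hts (Subtype.ext h)), Matrix.one_apply_ne hts]
        · rw [hQp]
          simp only [dif_neg hex]
          by_cases hts : t = s
          · rw [if_pos hts, _root_.map_one, hts, Matrix.one_apply_eq]
          · rw [if_neg hts, map_zero, Matrix.one_apply_ne hts]
      have h1 : ev Qp.det = 1 := by rw [RingHom.map_det, hmap, Matrix.det_one]
      rw [hcon, map_zero] at h1
      exact zero_ne_one h1
    -- over the fraction field
    set QF : Matrix ↥Ri ↥Ri (FF V) := (algebraMap (PolyV V) (FF V)).mapMatrix Qp with hQF
    have hdetQF : IsUnit QF.det := by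
      rw [hQF, ← RingHom.map_det]
      rw [isUnit_iff_ne_zero]
      intro hcon
      exact hdetQ (IsFractionRing.injective (PolyV V) (FF V) (by rw [hcon, map_zero]))
    have hQQ : QF * QF⁻¹ = 1 := Matrix.mul_nonsing_inv QF hdetQF
    -- define ζi
    refine ⟨fun w s =>
      if hw : w ∈ Ei then (if hs : s ∈ Ri then QF⁻¹ ⟨s, hs⟩ (e ⟨w, hw⟩) else 0) else 0,
      ?_, ?_⟩
    · intro w s hne
      dsimp only at hne
      by_cases hw : w ∈ Ei
      · rw [dif_pos hw] at hne
        by_cases hs : s ∈ Ri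
        · have h1 := hRmem ⟨s, hs⟩
          have h2 := hEmem ⟨w, hw⟩
          exact ⟨h1.1, h1.2, h2.1, h2.2⟩
        · rw [dif_neg hs] at hne; exact absurd rfl hne
      · rw [dif_neg hw] at hne; exact absurd rfl hne
    · intro a ha w hw hcw
      have hwE : w ∈ Ei := by rw [hEi, Finset.mem_filter]; exact ⟨hw, hcw⟩
      have hsum : ∑ s : V, xF color R a s *
          (if hw' : w ∈ Ei then (if hs : s ∈ Ri then QF⁻¹ ⟨s, hs⟩ (e ⟨w, hw'⟩) else 0) else 0)
          = ∑ s ∈ Ri, xF color R a s *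
            (if hs : s ∈ Ri then QF⁻¹ ⟨s, hs⟩ (e ⟨w, hwE⟩) else 0) := by
      
        rw [← Finset.sum_subset (Finset.subset_univ Ri)]
        · apply Finset.sum_congr rfl
          intro s _
          rw [dif_pos hwE]
        · intro s _ hs
          rw [dif_pos hwE, dif_neg hs, mul_zero]
      rw [hsum]
      rw [← Finset.sum_coe_sort Ri]
      by_cases hca : color a = i
      · -- a is in Ei as well
        have haE : a ∈ Ei := by rw [hEi, Finset.mem_filter]; exact ⟨ha, hca⟩
        have hterm : ∀ s : ↥Ri, xF color R a (s : V) *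
            (if hs : (s : V) ∈ Ri then QF⁻¹ ⟨(s : V), hs⟩ (e ⟨w, hwE⟩) else 0)
            = QF (e ⟨a, haE⟩) s * QF⁻¹ s (e ⟨w, hwE⟩) := by
          intro s
          rw [dif_pos s.2]
          congr 1
          show xF color R a (s : V) = QF (e ⟨a, haE⟩) s
          rw [hQF]
          simp only [RingHom.mapMatrix_apply, Matrix.map_apply]
          rw [hrow ⟨a, haE⟩ s]
          rfl
        rw [Finset.sum_congr rfl (fun s _ => hterm s), ← Matrix.mul_apply, hQQ,
          Matrix.one_apply]
        by_cases haw : a = w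
        · subst haw
          rw [if_pos rfl, if_pos rfl]
        · rw [if_neg (fun h => haw (by
            have := e.injective h
            exact congrArg Subtype.val this)), if_neg haw]
      · -- colors differ : everything vanishes
        have hzero : ∀ s : ↥Ri, xF color R a (s : V) *
            (if hs : (s : V) ∈ Ri then QF⁻¹ ⟨(s : V), hs⟩ (e ⟨w, hwE⟩) else 0) = 0 := by
          intro s
          have : xF color R a (s : V) = 0 :=
            xF_color_ne color R (by rw [(hRmem s).2]; exact hca)
          rw [this, zero_mul]
        rw [Finset.sum_congr rfl (fun s _ => hzero s), Finset.sum_const_zero,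
          if_neg (by rintro rfl; exact hca hcw)]
  -- assemble over colors
  choose zi hz1 hz2 using key
  refine ⟨fun w s => zi (color w) w s, ?_, ?_⟩
  · intro w s hne
    obtain ⟨h1, h2, _, _⟩ := hz1 (color w) w s hne
    exact ⟨h1, h2⟩
  · intro a ha w hw
    exact hz2 (color w) a ha w hw rfl

section RowMatrices

set_option linter.unusedSectionVars false

open Finset Matrix

variable {V : Type} [Fintype V] [DecidableEq V] [LinearOrder V] {c : ℕ}

lemma colorful_card (color : V → Fin c) {k : Fin c → ℕ} {S : Finset V}
    (h : ∀ i, (S.filter fun v => color v = i).card = k i) : S.card = ∑ i, k i := by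
  classical
  rw [Finset.card_eq_sum_card_fiberwise (f := color) (t := univ) (fun x _ => mem_univ _)]
  exact Finset.sum_congr rfl (fun i _ => h i)

/-- Rows of the generic matrix corresponding to the elements of a `κ`-set `A`. -/
noncomputable def rowMat (color : V → Fin c) (R : Finset V) (κ : ℕ) (A : Finset V) :
    Matrix (Fin κ) V (FF V) :=
  if h : A.card = κ then Matrix.of (fun i v => xF color R (A.orderEmbOfFin h i) v) else 0

/-- The dual test matrix built from a free face `L` and dual vectors `ζ`. -/
noncomputable def Ymat (color : V → Fin c) (R : Finset V) (ζ : V → V → FF V)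
    (L : Finset V) (κ : ℕ) (A₀ : Finset V) : Matrix (Fin κ) V (FF V) :=
  if h : A₀.card = κ then Matrix.of (fun j s =>
    if A₀.orderEmbOfFin h j ∈ L then
      (if A₀.orderEmbOfFin h j ∈ R then xiv color R (A₀.orderEmbOfFin h j) s
       else (if s = A₀.orderEmbOfFin h j then 1 else 0))
    else ζ (A₀.orderEmbOfFin h j) s)
  else 0

lemma msub_rowMat_eq_zero (color : V → Fin c) (R : Finset V) {κ : ℕ} {k : Fin c → ℕ}
    {A S : Finset V} (hA : A.card = κ)
    (hAc : ∀ i, (A.filter fun v => color v = i).card = k i)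
    (hS : S.card = κ) {i0 : Fin c}
    (hi0 : (S.filter fun v => color v = i0).card ≠ k i0) :
    msub (rowMat color R κ A) S = 0 := by
  classical
  rw [msub, dif_pos hS, rowMat, dif_pos hA]
  apply det_eq_zero_of_fiber_card_ne _ (fun i => color (A.orderEmbOfFin hA i))
    (fun j => color (S.orderEmbOfFin hS j)) ?_ i0 ?_
  · intro i j hne
    exact xF_color_ne color R hne
  · beta_reduce
    rw [card_filter_orderEmbOfFin hA (p := fun v => color v = i0),
      card_filter_orderEmbOfFin hS (p := fun v => color v = i0), hAc i0]
    exact fun h => hi0 h.symm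

lemma msub_Ymat_eq_zero (color : V → Fin c) (R : Finset V) (ζ : V → V → FF V)
    (hζsupp : ∀ w s, ζ w s ≠ 0 → s ∈ R ∧ color s = color w)
    {κ d : ℕ} {L A₀ S : Finset V} (hA₀ : A₀.card = κ) (hLd : L.card ≤ d)
    (hS : S.card = κ) (hSd : d < (S \ R).card) :
    msub (Ymat color R ζ L κ A₀) S = 0 := by
  classical
  rw [msub, dif_pos hS, Ymat, dif_pos hA₀]
  apply det_eq_zero_of_support _
    (univ.filter fun j : Fin κ => S.orderEmbOfFin hS j ∉ R ∧ S.orderEmbOfFin hS j ∉ L)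
    (univ.filter fun i : Fin κ => A₀.orderEmbOfFin hA₀ i ∈ L ∧ A₀.orderEmbOfFin hA₀ i ∈ R)
  · -- cardinalities
    beta_reduce
    rw [card_filter_orderEmbOfFin hS (p := fun s => s ∉ R ∧ s ∉ L),
      card_filter_orderEmbOfFin hA₀ (p := fun w => w ∈ L ∧ w ∈ R)]
    have h1 : (A₀.filter fun w => w ∈ L ∧ w ∈ R) ⊆ L.filter (fun w => w ∈ R) := by
      intro w hwmem
      rw [Finset.mem_filter] at hwmem ⊢
      exact ⟨hwmem.2.1, hwmem.2.2⟩
    have h1' := Finset.card_le_card h1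
    have h2 : (S.filter fun s => s ∉ R ∧ s ∉ L) = (S \ R) \ (L.filter fun w => w ∉ R) := by
      ext x
      simp only [Finset.mem_filter, Finset.mem_sdiff]
      tauto
    have h3 := Finset.le_card_sdiff (L.filter fun w => w ∉ R) (S \ R)
    have h4 := Finset.card_filter_add_card_filter_not
      (s := L) (p := fun w => w ∈ R)
    rw [h2]
    omega
  · -- vanishing entries
    intro j hj i hi
    rw [Finset.mem_filter] at hj
    rw [Finset.mem_filter] at hi
    have hsR := hj.2.1
    have hsL := hj.2.2
    have hi' : ¬(A₀.orderEmbOfFin hA₀ i ∈ L ∧ A₀.orderEmbOfFin hA₀ i ∈ R) := by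
      intro hcon; exact hi (by simp [Finset.mem_filter, hcon])
    simp only [Matrix.submatrix_apply, Matrix.of_apply, id_eq]
    by_cases hbL : A₀.orderEmbOfFin hA₀ i ∈ L
    · rw [if_pos hbL, if_neg (fun hbR => hi' ⟨hbL, hbR⟩)]
      rw [if_neg (fun (h : S.orderEmbOfFin hS j = A₀.orderEmbOfFin hA₀ i) =>
        hsL (by rw [h]; exact hbL))]
    · rw [if_neg hbL]
      by_contra hne
      exact hsR (hζsupp _ _ hne).1

/-- The pairing entry between a row vector `x_a` and a test row for vertex `b`. -/
lemma pair_entry (color : V → Fin c) (R : Finset V) (ζ : V → V → FF V)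
    (Mf L : Finset V)
    (hζpair : ∀ a ∈ Mf, ∀ w ∈ Mf, ∑ s : V, xF color R a s * ζ w s
      = if a = w then 1 else 0)
    (a b : V) (hb : b ∈ L ∨ (b ∈ Mf ∧ a ∈ Mf)) :
    ∑ v : V, xF color R a v *
      (if b ∈ L then (if b ∈ R then xiv color R b v else (if v = b then 1 else 0))
       else ζ b v)
      = if a = b then 1 else 0 := by
  classical
  by_cases hbL : b ∈ L
  · simp only [if_pos hbL]
    by_cases hbR : b ∈ R
    · simp only [if_pos hbR]
      exact pair_xi color R a b
    · simp only [if_neg hbR, mul_ite, mul_one, mul_zero]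
      rw [Finset.sum_ite_eq' Finset.univ b (fun v => xF color R a v), if_pos (mem_univ b),
        xF_notR color R hbR]
  · simp only [if_neg hbL]
    rcases hb with hb | hb
    · exact absurd hb hbL
    · exact hζpair a hb.2 b hb.1

end RowMatrices

section MainAux

set_option linter.unusedSectionVars false
set_option maxHeartbeats 1000000

open Finset Matrix

variable {V : Type} [Fintype V] [DecidableEq V] [LinearOrder V] {c : ℕ}

lemma sum_pair_eq_det (color : V → Fin c) (R : Finset V) (ζ : V → V → FF V)
    (hζsupp : ∀ w s, ζ w s ≠ 0 → s ∈ R ∧ color s = color w)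
    (d : ℕ) (k : Fin c → ℕ)
    (P : Finset (Finset V))
    (hP : ∀ S : Finset V, S ∈ P ↔
      ((∀ i, (S.filter fun v => color v = i).card = k i) ∧ (S \ R).card ≤ d))
    {L A₀ A : Finset V} (hLd : L.card ≤ d)
    (hA₀ : A₀.card = ∑ i, k i)
    (hA : A.card = ∑ i, k i) (hAc : ∀ i, (A.filter fun v => color v = i).card = k i) :
    ∑ S ∈ P, msub (rowMat color R (∑ i, k i) A) S * msub (Ymat color R ζ L (∑ i, k i) A₀) S
      = ((rowMat color R (∑ i, k i) A) * (Ymat color R ζ L (∑ i, k i) A₀)ᵀ).det := by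
  classical
  rw [cauchy_binet]
  apply Finset.sum_subset
  · intro S hSP
    rw [hP] at hSP
    rw [Finset.mem_powersetCard]
    exact ⟨Finset.subset_univ _, colorful_card color hSP.1⟩
  · intro S hSpc hSP
    have hSκ : S.card = ∑ i, k i := (Finset.mem_powersetCard.mp hSpc).2
    rw [hP] at hSP
    push_neg at hSP
    by_cases hcol : ∀ i, (S.filter fun v => color v = i).card = k i
    · have hd := hSP hcol
      rw [msub_Ymat_eq_zero color R ζ hζsupp hA₀ hLd hSκ hd, mul_zero]
    · push_neg at hcol
      obtain ⟨i0, hi0⟩ := hcol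
      rw [msub_rowMat_eq_zero color R hA hAc hSκ hi0, zero_mul]

theorem aux_bound (d : ℕ)
    (color : V → Fin c) (r k : Fin c → ℕ) (R : Finset V)
    (hR : ∀ i, (R.filter fun v => color v = i).card = r i)
    (K : Finset (Finset V)) (hK : IsComplex K) (hcoll : Collapsible d K)
    (hdim : ∀ i, ∀ A ∈ K, (∀ v ∈ A, color v = i) → A.card ≤ r i)
    (P : Finset (Finset V))
    (hP : ∀ S : Finset V, S ∈ P ↔
      ((∀ i, (S.filter fun v => color v = i).card = k i) ∧ (S \ R).card ≤ d))
    (Fc : Finset (Finset V))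
    (hFc : ∀ A, A ∈ Fc ↔ A ∈ K ∧ (∀ i, (A.filter fun v => color v = i).card = k i)) :
    Fc.card ≤ P.card := by
  classical
  set u : Finset V → (↥P → FF V) := fun A S => msub (rowMat color R (∑ i, k i) A) S.val
    with hu
  set cf : Finset (Finset V) → Finset (Finset V) :=
    fun K' => K'.filter (fun A => ∀ i, (A.filter fun v => color v = i).card = k i) with hcf
  have hcfmem : ∀ K' A, A ∈ cf K' ↔
      (A ∈ K' ∧ ∀ i, (A.filter fun v => color v = i).card = k i) := by
    intro K' A
    rw [hcf]
    exact Finset.mem_filter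
  -- The main induction along the collapsing sequence.
  have main : ∀ (K' : Finset (Finset V)), Relation.ReflTransGen (ElemCollapse d) K' ∅ →
      IsComplex K' → K' ⊆ K →
      ∀ g : Finset V → FF V, (∑ A ∈ cf K', g A • u A) = 0 → ∀ A ∈ cf K', g A = 0 := by
    intro K' hc
    induction hc using Relation.ReflTransGen.head_induction_on with
    | refl =>
      intro _ _ g _ A hA
      rw [hcfmem] at hA
      simp only [Finset.notMem_empty, false_and] at hA
    | @head Kc Km hstep hrest IH =>
      intro hKc hsub g hsum
      obtain ⟨L, Mf, hLK, hMK, hLd, hmax, hKm⟩ := hstep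
      -- the dual vectors
      have hMfdim : ∀ i, ((Mf.filter fun v => color v = i)).card ≤ r i := by
        intro i
        apply hdim i _ (hsub (hKc Mf hMK _ (Finset.filter_subset _ _)))
        intro v hv
        exact (Finset.mem_filter.mp hv).2
      obtain ⟨ζ, hζsupp, hζpair⟩ := zeta_exists color R r hR Mf hMfdim
      -- first: coefficients of faces containing L vanish
      have hkill : ∀ A₀ ∈ cf Kc, L ⊆ A₀ → g A₀ = 0 := by
        intro A₀ hA₀ hLA₀
        rw [hcfmem] at hA₀
        obtain ⟨hA₀K, hA₀c⟩ := hA₀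
        have hA₀κ : A₀.card = ∑ i, k i := colorful_card color hA₀c
        have hA₀Mf : A₀ ⊆ Mf := hmax A₀ hA₀K hLA₀
        set Y := Ymat color R ζ L (∑ i, k i) A₀ with hY
        -- Z-matrix entries
        have hZval : ∀ (A : Finset V) (hAκ : A.card = ∑ i, k i),
            (∀ i j, A₀.orderEmbOfFin hA₀κ j ∈ L ∨
              (A₀.orderEmbOfFin hA₀κ j ∈ Mf ∧ A.orderEmbOfFin hAκ i ∈ Mf)) →
            ∀ i j, ((rowMat color R (∑ i, k i) A) * Yᵀ) i j
              = if A.orderEmbOfFin hAκ i = A₀.orderEmbOfFin hA₀κ j then 1 else 0 := by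
          intro A hAκ hdisj i j
          rw [Matrix.mul_apply]
          have hterm : ∀ v : V, rowMat color R (∑ i, k i) A i v * Yᵀ v j
              = xF color R (A.orderEmbOfFin hAκ i) v *
                (if A₀.orderEmbOfFin hA₀κ j ∈ L then
                  (if A₀.orderEmbOfFin hA₀κ j ∈ R then
                    xiv color R (A₀.orderEmbOfFin hA₀κ j) v
                  else (if v = A₀.orderEmbOfFin hA₀κ j then 1 else 0))
                else ζ (A₀.orderEmbOfFin hA₀κ j) v) := by
            intro v
            rw [Matrix.transpose_apply, hY, Ymat, dif_pos hA₀κ, rowMat, dif_pos hAκ]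
            rfl
          rw [Finset.sum_congr rfl (fun v _ => hterm v)]
          exact pair_entry color R ζ Mf L hζpair _ _ (hdisj i j)
        have hZentry : ∀ (A : Finset V) (hAκ : A.card = ∑ i, k i) (i j : Fin (∑ i, k i))
            (v : V), rowMat color R (∑ i, k i) A i v * Yᵀ v j
              = xF color R (A.orderEmbOfFin hAκ i) v *
                (if A₀.orderEmbOfFin hA₀κ j ∈ L then
                  (if A₀.orderEmbOfFin hA₀κ j ∈ R then
                    xiv color R (A₀.orderEmbOfFin hA₀κ j) v
                  else (if v = A₀.orderEmbOfFin hA₀κ j then 1 else 0))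
                else ζ (A₀.orderEmbOfFin hA₀κ j) v) := by
          intro A hAκ i j v
          rw [Matrix.transpose_apply, hY, Ymat, dif_pos hA₀κ, rowMat, dif_pos hAκ]
          rfl
        -- pair the linear relation with the test vector
        have h2 : ∑ S : ↥P, (∑ A ∈ cf Kc, g A • u A) S * msub Y S.val = 0 := by
          apply Finset.sum_eq_zero
          intro S _
          rw [hsum]
          simp
        have h3 : ∑ S : ↥P, (∑ A ∈ cf Kc, g A • u A) S * msub Y S.val
            = ∑ A ∈ cf Kc, g A * (∑ S : ↥P, u A S * msub Y S.val) := by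
          calc ∑ S : ↥P, (∑ A ∈ cf Kc, g A • u A) S * msub Y S.val
              = ∑ S : ↥P, ∑ A ∈ cf Kc, (g A * u A S) * msub Y S.val := by
                apply Finset.sum_congr rfl
                intro S _
                rw [Finset.sum_apply, Finset.sum_mul]
                apply Finset.sum_congr rfl
                intro A _
                rw [Pi.smul_apply, smul_eq_mul]
            _ = ∑ A ∈ cf Kc, ∑ S : ↥P, (g A * u A S) * msub Y S.val := Finset.sum_comm
            _ = ∑ A ∈ cf Kc, g A * (∑ S : ↥P, u A S * msub Y S.val) := by
                apply Finset.sum_congr rfl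
                intro A _
                rw [Finset.mul_sum]
                apply Finset.sum_congr rfl
                intro S _
                ring
        have h4 : ∀ A ∈ cf Kc, (∑ S : ↥P, u A S * msub Y S.val)
            = ((rowMat color R (∑ i, k i) A) * Yᵀ).det := by
          intro A hA
          rw [hcfmem] at hA
          have hAκ := colorful_card color hA.2
          have hconv : ∑ S : ↥P, u A S * msub Y S.val
              = ∑ S ∈ P, msub (rowMat color R (∑ i, k i) A) S * msub Y S := by
            rw [← Finset.sum_coe_sort P
              (fun S => msub (rowMat color R (∑ i, k i) A) S * msub Y S)]
          rw [hconv, hY]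
          exact sum_pair_eq_det color R ζ hζsupp d k P hP hLd hA₀κ hAκ hA.2
        have h0 : ∑ A ∈ cf Kc, g A * (((rowMat color R (∑ i, k i) A) * Yᵀ).det) = 0 := by
          rw [← h2, h3]
          apply Finset.sum_congr rfl
          intro A hA
          rw [h4 A hA]
        -- evaluate the determinants
        have hdet0 : ∀ A ∈ cf Kc, A ≠ A₀ →
            ((rowMat color R (∑ i, k i) A) * Yᵀ).det = 0 := by
          intro A hA hne
          rw [hcfmem] at hA
          have hAκ := colorful_card color hA.2
          by_cases hL : L ⊆ A
          · -- a row of zeros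
            have hAMf : A ⊆ Mf := hmax A hA.1 hL
            have hnotsub : ¬ A ⊆ A₀ := fun hs => hne
              (Finset.eq_of_subset_of_card_le hs (le_of_eq (hA₀κ.trans hAκ.symm)))
            obtain ⟨a, haA, haA₀⟩ := Finset.not_subset.mp hnotsub
            obtain ⟨i₀, hi₀⟩ : ∃ i₀, A.orderEmbOfFin hAκ i₀ = a := by
              have : a ∈ Set.range (A.orderEmbOfFin hAκ) := by
                rw [Finset.range_orderEmbOfFin]; exact haA
              exact this
            apply Matrix.det_eq_zero_of_row_eq_zero i₀
            intro j
            rw [hZval A hAκ ?hdisj i₀ j]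
            case hdisj =>
              intro i j
              by_cases hjL : A₀.orderEmbOfFin hA₀κ j ∈ L
              · exact Or.inl hjL
              · exact Or.inr ⟨hA₀Mf (Finset.orderEmbOfFin_mem A₀ hA₀κ j),
                  hAMf (Finset.orderEmbOfFin_mem A hAκ i)⟩
            rw [hi₀, if_neg]
            intro hcon
            exact haA₀ (by rw [hcon]; exact Finset.orderEmbOfFin_mem A₀ hA₀κ j)
          · -- a column of zeros
            obtain ⟨w, hwL, hwA⟩ := Finset.not_subset.mp hL
            have hwA₀ : w ∈ A₀ := hLA₀ hwL
            obtain ⟨j₀, hj₀⟩ : ∃ j₀, A₀.orderEmbOfFin hA₀κ j₀ = w := by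
              have : w ∈ Set.range (A₀.orderEmbOfFin hA₀κ) := by
                rw [Finset.range_orderEmbOfFin]; exact hwA₀
              exact this
            apply Matrix.det_eq_zero_of_column_eq_zero j₀
            intro i
            rw [Matrix.mul_apply]
            rw [Finset.sum_congr rfl (fun v _ => hZentry A hAκ i j₀ v)]
            rw [pair_entry color R ζ Mf L hζpair _ _
              (Or.inl (show A₀.orderEmbOfFin hA₀κ j₀ ∈ L by rw [hj₀]; exact hwL))]
            rw [if_neg]
            intro hcon
            apply hwA
            rw [← hj₀, ← hcon]
            exact Finset.orderEmbOfFin_mem A hAκ i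
        have hdet1 : ((rowMat color R (∑ i, k i) A₀) * Yᵀ).det = 1 := by
          have hid : (rowMat color R (∑ i, k i) A₀) * Yᵀ = 1 := by
            ext i j
            rw [hZval A₀ hA₀κ ?hdisj2 i j]
            case hdisj2 =>
              intro i j
              by_cases hjL : A₀.orderEmbOfFin hA₀κ j ∈ L
              · exact Or.inl hjL
              · exact Or.inr ⟨hA₀Mf (Finset.orderEmbOfFin_mem A₀ hA₀κ j),
                  hA₀Mf (Finset.orderEmbOfFin_mem A₀ hA₀κ i)⟩
            rw [Matrix.one_apply]
            by_cases hij : i = j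
            · rw [if_pos (by rw [hij]), if_pos hij]
            · rw [if_neg (fun h => hij ((A₀.orderEmbOfFin hA₀κ).injective h)), if_neg hij]
          rw [hid, Matrix.det_one]
        have hmem₀ : A₀ ∈ cf Kc := (hcfmem Kc A₀).mpr ⟨hA₀K, hA₀c⟩
        have hfin : (∑ A ∈ cf Kc, g A * (((rowMat color R (∑ i, k i) A) * Yᵀ).det))
            = g A₀ * (((rowMat color R (∑ i, k i) A₀) * Yᵀ).det) :=
          Finset.sum_eq_single_of_mem A₀ hmem₀ (fun A hA hne => by
            rw [hdet0 A hA hne, mul_zero])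
        rw [hfin, hdet1, mul_one] at h0
        exact h0
      -- now reduce to the smaller complex
      have hKmc : IsComplex Km := by
        intro A hA B hBA
        rw [hKm, Finset.mem_filter] at hA ⊢
        exact ⟨hKc A hA.1 B hBA, fun hLB => hA.2 (hLB.trans hBA)⟩
      have hKmsub : Km ⊆ K := by
        rw [hKm]
        exact (Finset.filter_subset _ _).trans hsub
      have hcfKm : cf Km = (cf Kc).filter (fun A => ¬ L ⊆ A) := by
        ext A
        simp only [hcf, hKm, Finset.mem_filter]
        tauto
      have hsum' : ∑ A ∈ cf Km, g A • u A = 0 := by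
        rw [hcfKm]
        have hsplit := Finset.sum_filter_add_sum_filter_not (cf Kc)
          (fun A => L ⊆ A) (fun A => g A • u A)
        have hzero : ∑ A ∈ (cf Kc).filter (fun A => L ⊆ A), g A • u A = 0 := by
          apply Finset.sum_eq_zero
          intro A hA
          rw [Finset.mem_filter] at hA
          rw [hkill A hA.1 hA.2, zero_smul]
        have := hsum
        rw [← hsplit, hzero, zero_add] at this
        exact this
      intro A hA
      by_cases hL : L ⊆ A
      · exact hkill A hA hL
      · apply IH hKmc hKmsub g hsum' A
        rw [hcfKm, Finset.mem_filter]
        exact ⟨hA, hL⟩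
  -- from the independence statement to the cardinality bound
  have hFccf : Fc = cf K := by
    ext A
    rw [hFc, hcfmem]
  have hli : LinearIndependent (FF V) (fun A : ↥(cf K) => u ↑A) := by
    rw [linearIndependent_iff']
    intro s gg hs0 i hi
    set G : Finset V → FF V := fun B => ∑ j ∈ s, if (j : Finset V) = B then gg j else 0
      with hG
    have hGsum : ∑ B ∈ cf K, G B • u B = 0 := by
      calc ∑ B ∈ cf K, G B • u B
          = ∑ B ∈ cf K, ∑ j ∈ s, (if (j : Finset V) = B then gg j • u B else 0) := by
            apply Finset.sum_congr rfl
            intro B _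
            rw [hG, Finset.sum_smul]
            apply Finset.sum_congr rfl
            intro j _
            rw [ite_smul, zero_smul]
        _ = ∑ j ∈ s, ∑ B ∈ cf K, (if (j : Finset V) = B then gg j • u B else 0) :=
            Finset.sum_comm
        _ = ∑ j ∈ s, gg j • u ↑j := by
            apply Finset.sum_congr rfl
            intro j hj
            rw [Finset.sum_ite_eq (cf K) (↑j : Finset V) (fun B => gg j • u B),
              if_pos j.2]
        _ = 0 := hs0
    have hall := main K hcoll hK (fun _ h => h) G hGsum
    have hGi : G ↑i = gg i := by
      show (∑ j ∈ s, if (j : Finset V) = ↑i then gg j else 0) = gg i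
      have hrw : ∀ j ∈ s, (if (j : Finset V) = ↑i then gg j else 0)
          = (if j = i then gg j else 0) := by
        intro j _
        by_cases hji : j = i
        · rw [if_pos (by rw [hji]), if_pos hji]
        · rw [if_neg (fun h => hji (Subtype.ext h)), if_neg hji]
      rw [Finset.sum_congr rfl hrw, Finset.sum_ite_eq' s i gg, if_pos hi]
    rw [← hGi]
    exact hall ↑i i.2
  have hcard1 : Fintype.card ↥(cf K) ≤ Module.finrank (FF V) (↥P → FF V) :=
    hli.fintype_card_le_finrank
  rw [Module.finrank_pi] at hcard1
  rw [hFccf, ← Fintype.card_coe (cf K), ← Fintype.card_coe P]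
  exact hcard1

end MainAux


/-- **Theorem 1.10 (main technical bound)**. Let `K` be a `d`-collapsible complex with
vertex set `V` colored by `color : V → Fin c`, where the color class of `i` has size
`n i ≥ 1`. Let `r i ≥ 1` with `dim K[N i] ≤ r i - 1` (every face inside one color
class has at most `r i` vertices), let `k i ≤ n i`, and let `R ⊆ V` meet the `i`-th
color class in exactly `r i` vertices. Then the number of `k`-colorful faces of `K`
is at most `p_k(n, d, r) = |{S ∈ binom(N, k) : |S \ R| ≤ d}|`. -/
theorem main_technical_bound
    (c d : ℕ) (hc : 1 ≤ c) (hd : 1 ≤ d) {V : Type} [Fintype V] [DecidableEq V]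
    (K : Finset (Finset V)) (hK : IsComplex K) (hcoll : Collapsible d K)
    (color : V → Fin c) (n r k : Fin c → ℕ)
    (hn : ∀ i, (Finset.univ.filter fun v => color v = i).card = n i)
    (hnpos : ∀ i, 1 ≤ n i) (hrpos : ∀ i, 1 ≤ r i)
    (hdim : ∀ i, ∀ A ∈ K, (∀ v ∈ A, color v = i) → A.card ≤ r i)
    (hk : ∀ i, k i ≤ n i)
    (R : Finset V) (hR : ∀ i, (R.filter fun v => color v = i).card = r i) :
    (K.filter fun A => ∀ i, (A.filter fun v => color v = i).card = k i).card ≤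
      (Finset.univ.filter fun S : Finset V =>
        (∀ i, (S.filter fun v => color v = i).card = k i) ∧ (S \ R).card ≤ d).card := by
  classical
  letI : LinearOrder V := LinearOrder.lift'
    (fun v => ((Fintype.equivFin V) v : ℕ))
    (Fin.val_injective.comp (Fintype.equivFin V).injective)
  apply aux_bound d color r k R hR K hK hcoll hdim
  · intro S
    rw [Finset.mem_filter]
    exact and_iff_right (Finset.mem_univ S)
  · intro A
    exact Finset.mem_filter
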